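/- Every discrete valuation ring is a BL-ring, i.e., its ideals satisfy both BLR-1 and BLR-2. -/

import Mathlib

lemma blr_key {R : Type*} [CommRing R] [IsDomain R] [IsPrincipalIdealRing R]
    (I J : Ideal R) (h : J ≤ I) : J ≤ I * (J.colon I) := by
  obtain ⟨a, rfl⟩ := (inferInstance : Submodule.IsPrincipal I)
  intro x hx
  obtain ⟨y, rfl⟩ := Ideal.mem_span_singleton'.mp (h hx)
  have hy : y ∈ J.colon (Ideal.span {a}) := by
    rw [Ideal.mem_colon_span_singleton]; exact hx
  exact mul_comm a y ▸ Ideal.mul_mem_mul (Ideal.mem_span_singleton_self a) hy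

lemma blr_mul_le {R : Type*} [CommRing R] (I J : Ideal R) : I * (J.colon I) ≤ J := by
  rw [Ideal.mul_le]
  intro a ha b hb
  rw [mul_comm]
  exact Submodule.mem_colon.mp hb a ha

/-- Every discrete valuation ring is a BL-ring: its ideals satisfy
BLR-1 (`I ⊓ J = I * (I → J)`, where `I → J = J.colon I`) and
BLR-2 (`(I → J) + (J → I) = R`). -/
theorem stmt_1 {R : Type*} [CommRing R] [IsDomain R] [IsDiscreteValuationRing R] :
    (∀ I J : Ideal R, I ⊓ J = I * (J.colon I)) ∧
      (∀ I J : Ideal R, J.colon I + I.colon J = ⊤) := by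
  have colon_top : ∀ I J : Ideal R, I ≤ J → J.colon I = ⊤ := by
    intro I J hIJ
    rw [eq_top_iff]
    intro x _
    rw [Submodule.mem_colon]
    exact fun p hp => hIJ (Ideal.mul_mem_left I x hp)
  constructor
  · intro I J
    apply le_antisymm
    · rcases (ValuationRing.le_total_ideal (A := R)).total I J with h | h
      · rw [colon_top I J h, Ideal.mul_top]
        exact inf_le_left
      · exact le_trans inf_le_right (blr_key I J h)
    · exact le_inf Ideal.mul_le_left (blr_mul_le I J)
  · intro I J
    rcases (ValuationRing.le_total_ideal (A := R)).total I J with h | h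
    · simp [colon_top I J h]
    · simp [colon_top J I h]
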